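/- Let α ∈ 𝕋 be non-periodic under the doubling map, let n ≥ 0, and let x ∈ 𝕋 satisfy h^{n+1}(x) ≠ α. Then there exists exactly one generalized cylinder set of degree n containing x. -/

import Mathlib

open Set MeasureTheory Filter
open scoped Classical

noncomputable section

/-- The circle `ℝ/ℤ`. -/
abbrev 𝕋 := AddCircle (1 : ℝ)

/-- The doubling map `h(x) = 2x` on the circle. -/
def dbl (x : 𝕋) : 𝕋 := x + x

/-- The representative of a point of the circle lying in `[0,1)`. -/
def rep (x : 𝕋) : ℝ := (AddCircle.equivIco 1 0 x : ℝ)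

/-- `⋆₁ = α/2`. -/
def star1 (α : 𝕋) : 𝕋 := ((rep α / 2 : ℝ) : 𝕋)

/-- `⋆₂ = α/2 + 1/2`. -/
def star2 (α : 𝕋) : 𝕋 := ((rep α / 2 + 1 / 2 : ℝ) : 𝕋)

/-- The closed semicircle `C(L) = {α/2 + t : t ∈ [0,1/2]}`. -/
def arcL (α : 𝕋) : Set 𝕋 := (fun t : ℝ => ((rep α / 2 + t : ℝ) : 𝕋)) '' Set.Icc 0 (1 / 2)

/-- The closed semicircle `C(R) = {α/2 + 1/2 + t : t ∈ [0,1/2]}`. -/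
def arcR (α : 𝕋) : Set 𝕋 :=
  (fun t : ℝ => ((rep α / 2 + 1 / 2 + t : ℝ) : 𝕋)) '' Set.Icc 0 (1 / 2)

/-- The open semicircle `{α/2 + t : t ∈ (0,1/2)}`. -/
def openArcL (α : 𝕋) : Set 𝕋 := (fun t : ℝ => ((rep α / 2 + t : ℝ) : 𝕋)) '' Set.Ioo 0 (1 / 2)

/-- The open semicircle `{α/2 + 1/2 + t : t ∈ (0,1/2)}`. -/
def openArcR (α : 𝕋) : Set 𝕋 :=
  (fun t : ℝ => ((rep α / 2 + 1 / 2 + t : ℝ) : 𝕋)) '' Set.Ioo 0 (1 / 2)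

/-- The alphabet `{L, R, ⋆}`. -/
inductive Letter | L | R | star
deriving DecidableEq

/-- `itin α x n` is the `(n+1)`-st letter of the itinerary `I^α(x)`. -/
def itin (α x : 𝕋) (n : ℕ) : Letter :=
  if dbl^[n] x = star1 α ∨ dbl^[n] x = star2 α then Letter.star
  else if dbl^[n] x ∈ openArcL α then Letter.L else Letter.R

/-- The lamination `x ≈_α y`. -/
def approx (α : 𝕋) (x y : 𝕋) : Prop :=
  ∀ n : ℕ, itin α x n = itin α y n ∨ itin α x n = Letter.star ∨ itin α y n = Letter.star

/-- A point is periodic under the doubling map. -/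
def IsPeriodicPt' (x : 𝕋) : Prop := ∃ k : ℕ, 1 ≤ k ∧ dbl^[k] x = x

/-- `α` is periodic under the doubling map. -/
def Periodic' (α : 𝕋) : Prop := IsPeriodicPt' α

/-- `α` is pre-periodic under the doubling map. -/
def PrePeriodic (α : 𝕋) : Prop := ∃ m : ℕ, IsPeriodicPt' (dbl^[m] α)

/-- `D` is a gluing link with `n` arcs with respect to `≈_α`: a disjoint union of `n` closed
arcs whose `2n` endpoints occur in counterclockwise cyclic order and are consecutively glued
by `≈_α`. -/
def IsGluingLink (α : 𝕋) (n : ℕ) (D : Set 𝕋) : Prop :=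
  0 < n ∧ ∃ s e : ℕ → ℝ,
    (∀ i < n, s i ≤ e i) ∧
    (∀ i j : ℕ, i < j → j < n → e i < s j) ∧
    (∀ i < n, ∀ j < n, e j < s i + 1) ∧
    D = ⋃ i ∈ Finset.range n, (fun t : ℝ => (t : 𝕋)) '' Set.Icc (s i) (e i) ∧
    (∀ i < n, approx α ((e i : ℝ) : 𝕋) ((s ((i + 1) % n) : ℝ) : 𝕋))

/-- `L̃(x)`: the `h`-preimage of `x` in the interior of `C(L)` (for `x ≠ α`). -/
def tldL (α x : 𝕋) : 𝕋 :=
  if ((rep x / 2 : ℝ) : 𝕋) ∈ openArcL α then ((rep x / 2 : ℝ) : 𝕋)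
  else ((rep x / 2 + 1 / 2 : ℝ) : 𝕋)

/-- `R̃(x)`: the `h`-preimage of `x` in the interior of `C(R)` (for `x ≠ α`). -/
def tldR (α x : 𝕋) : 𝕋 :=
  if ((rep x / 2 : ℝ) : 𝕋) ∈ openArcR α then ((rep x / 2 : ℝ) : 𝕋)
  else ((rep x / 2 + 1 / 2 : ℝ) : 𝕋)

/-- The inverse branch associated with a single letter of `{L,R}`
(`true` codes `L`, `false` codes `R`). -/
def tldB (α : 𝕋) (b : Bool) (x : 𝕋) : 𝕋 := if b then tldL α x else tldR α x

/-- `g̃ = g̃[1] ∘ ⋯ ∘ g̃[n]` for a word `g ∈ {L,R}^*`. -/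
def wtld (α : 𝕋) (g : List Bool) (x : 𝕋) : 𝕋 := g.foldr (fun b y => tldB α b y) x

/-- The embedding `e(θ) = exp(2πiθ)` of the circle into `ℂ`. -/
def emb (x : 𝕋) : ℂ := Complex.exp (2 * Real.pi * Complex.I * (rep x))

/-- The chord of a pair of points of the circle: the closed Euclidean segment joining their
images in `ℂ`. -/
def chord (a b : 𝕋) : Set ℂ := segment ℝ (emb a) (emb b)

/-- The union of all chords `l_g` for words `g ∈ {L,R}^n`. -/
def chordsUnion (α : 𝕋) (n : ℕ) : Set ℂ :=
  ⋃ g ∈ {g : List Bool | g.length = n},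
    chord (wtld α g (star1 α)) (wtld α g (star2 α))

/-- The closed unit disk minus the chords of level `n`. -/
def diskMinus (α : 𝕋) (n : ℕ) : Set ℂ := Metric.closedBall (0 : ℂ) 1 \ chordsUnion α n

/-- `C` is a generalized cylinder set of degree `n`: the trace on the circle of the closure of
a connected component of the closed unit disk minus the chords of level `n`. -/
def IsGCS (α : 𝕋) (n : ℕ) (C : Set 𝕋) : Prop :=
  ∃ z ∈ diskMinus α n,
    C = {x : 𝕋 | emb x ∈ closure (connectedComponentIn (diskMinus α n) z)}

/-- The closed region of the circle associated with a letter (`⋆` imposes no restriction). -/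
def semi (α : 𝕋) : Letter → Set 𝕋
  | Letter.L => arcL α
  | Letter.R => arcR α
  | Letter.star => Set.univ

/-- `C(u)` for a word `u ∈ {L,R,⋆}^m`. -/
def cylSet (α : 𝕋) (u : List Letter) : Set 𝕋 :=
  {x : 𝕋 | ∀ i < u.length, dbl^[i] x ∈ semi α (u.getD i Letter.star)}

/-- The digit sequence of `I(α) = I^α(α)` (0-indexed: `ia α n` is the `(n+1)`-st digit). -/
def ia (α : 𝕋) (n : ℕ) : Letter := itin α α n

/-- A set `ℛ ⊆ ℕ` of indices is `D`-rare. -/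
def DRare (D : ℕ) (R : Finset ℕ) : Prop :=
  ∀ i : ℕ, (R.filter (fun j => i ≤ j ∧ j ≤ i + D)).card ≤ 3

/-- The `i`-th digit (1-based) of `I(α)[1..n]` is `(D,ℛ)`-duplicating. -/
def DupDigit (α : 𝕋) (D : ℕ) (R : Finset ℕ) (n i : ℕ) : Prop :=
  ∃ a b : ℕ, 1 ≤ a ∧ a ≤ i ∧ i ≤ b ∧ b ≤ n ∧
    (∀ j, a ≤ j → j ≤ b → j ∉ R → ia α (j - 1) = ia α (j - a)) ∧
    (b = n ∨ D < b - a + 1)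


/-- `α` is strongly recurrent. -/
def StronglyRecurrent (α : 𝕋) : Prop :=
  ∀ D : ℕ, 0 < D → ∀ τ : ℝ, τ < 1 →
    ∃ n : ℕ, D < n ∧ ∃ R : Finset ℕ, R ⊆ Finset.Icc 1 n ∧ DRare D R ∧
      τ * n < ((Finset.Icc 1 n).filter (fun i => DupDigit α D R n i)).card

/-- `α` is weakly pre-periodic with period `k`. -/
def WeaklyPrePeriodicWith (α : 𝕋) (k : ℕ) : Prop :=
  1 ≤ k ∧ ∃ m : ℕ, 1 ≤ m ∧ ∃ X : Letter, (X = Letter.L ∨ X = Letter.R) ∧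
    ∀ n : ℕ, ia α (m + k * n - 1) = X

/-- `α` is weakly pre-periodic (for some period). -/
def WeaklyPrePeriodic (α : 𝕋) : Prop := ∃ k : ℕ, WeaklyPrePeriodicWith α k

end

namespace Stmt9Aux

lemma rep_coe (x : 𝕋) : ((rep x : ℝ) : 𝕋) = x := by
  exact (AddCircle.equivIco 1 0).symm_apply_apply x

lemma rep_mem (x : 𝕋) : rep x ∈ Set.Ico (0:ℝ) 1 := by
  simpa [rep] using (AddCircle.equivIco 1 0 x).2

lemma coe_add' (r s : ℝ) : ((r + s : ℝ) : 𝕋) = (r : 𝕋) + (s : 𝕋) := rfl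

lemma one_coe : ((1 : ℝ) : 𝕋) = 0 := by
  simpa using AddCircle.coe_period (p := (1:ℝ))

lemma dbl_coe (r : ℝ) : dbl ((r : ℝ) : 𝕋) = ((r + r : ℝ) : 𝕋) := by
  rw [dbl, coe_add']

lemma dbl_half_coe (r : ℝ) (x : 𝕋) (h : r + r = rep x) : dbl ((r : ℝ) : 𝕋) = x := by
  rw [dbl_coe, h, rep_coe]

lemma dbl_half_coe' (r : ℝ) (x : 𝕋) (h : r + r = rep x + 1) : dbl ((r : ℝ) : 𝕋) = x := by
  rw [dbl_coe, h, coe_add', one_coe, add_zero, rep_coe]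

lemma dbl_tldL (α x : 𝕋) : dbl (tldL α x) = x := by
  rw [tldL]; split
  · exact dbl_half_coe _ _ (by ring)
  · exact dbl_half_coe' _ _ (by ring)

lemma dbl_tldR (α x : 𝕋) : dbl (tldR α x) = x := by
  rw [tldR]; split
  · exact dbl_half_coe _ _ (by ring)
  · exact dbl_half_coe' _ _ (by ring)

lemma dbl_tldB (α : 𝕋) (b : Bool) (x : 𝕋) : dbl (tldB α b x) = x := by
  cases b <;> simp [tldB, dbl_tldL, dbl_tldR]

lemma dbl_star1 (α : 𝕋) : dbl (star1 α) = α := by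
  rw [star1]; exact dbl_half_coe _ _ (by ring)

lemma dbl_star2 (α : 𝕋) : dbl (star2 α) = α := by
  rw [star2]; exact dbl_half_coe' _ _ (by ring)

lemma iter_wtld (α : 𝕋) (g : List Bool) (x : 𝕋) : dbl^[g.length] (wtld α g x) = x := by
  induction g with
  | nil => simp [wtld]
  | cons b g ih =>
      rw [wtld, List.foldr_cons, List.length_cons, Function.iterate_succ_apply, dbl_tldB]
      simpa [wtld] using ih

lemma abs_emb (x : 𝕋) : ‖emb x‖ = 1 := by
  rw [emb]
  have h : (2 * Real.pi * Complex.I * (rep x : ℂ))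
      = ((2 * Real.pi * rep x : ℝ) : ℂ) * Complex.I := by push_cast; ring
  rw [h, Complex.norm_exp_ofReal_mul_I]

lemma emb_inj : Function.Injective emb := by
  intro x y h
  rw [emb, emb, Complex.exp_eq_exp_iff_exists_int] at h
  obtain ⟨k, hk⟩ := h
  have hne : (2 * Real.pi * Complex.I : ℂ) ≠ 0 := by
    simp [Real.pi_ne_zero, Complex.I_ne_zero]
  have h2 : (2 * Real.pi * Complex.I) * (rep x : ℂ)
      = (2 * Real.pi * Complex.I) * (((rep y : ℝ) : ℂ) + (k : ℂ)) := by
    rw [hk]; push_cast; ring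
  have h3 : (rep x : ℂ) = ((rep y : ℝ) : ℂ) + (k : ℂ) := mul_left_cancel₀ hne h2
  have h4 : rep x = rep y + k := by exact_mod_cast h3
  have hx := rep_mem x
  have hy := rep_mem y
  have hk1 : (k : ℝ) < 1 := by linarith [hx.2, hy.1]
  have hk2 : (-1 : ℝ) < k := by linarith [hx.1, hy.2]
  have hk1' : k < 1 := by exact_mod_cast hk1
  have hk2' : (-1 : ℤ) < k := by exact_mod_cast hk2
  have hk0 : k = 0 := by omega
  have h5 : rep x = rep y := by rw [h4, hk0]; simp
  calc x = ((rep x : ℝ) : 𝕋) := (rep_coe x).symm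
    _ = ((rep y : ℝ) : 𝕋) := by rw [h5]
    _ = y := rep_coe y

lemma mem_chord_circle {a b : 𝕋} {z : ℂ} (hz : ‖z‖ = 1) (h : z ∈ chord a b) :
    z = emb a ∨ z = emb b := by
  rw [chord] at h
  by_cases hab : emb a = emb b
  · rw [hab, segment_same] at h
    exact Or.inr h
  · rw [← insert_endpoints_openSegment] at h
    rcases h with h | h | h
    · exact Or.inl h
    · exact Or.inr h
    · exfalso
      have ha : emb a ∈ Metric.closedBall (0:ℂ) 1 := by
        simp [Metric.mem_closedBall, Complex.dist_eq, abs_emb a]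
      have hb : emb b ∈ Metric.closedBall (0:ℂ) 1 := by
        simp [Metric.mem_closedBall, Complex.dist_eq, abs_emb b]
      have hint := (strictConvex_closedBall ℝ (0:ℂ) 1).openSegment_subset ha hb hab h
      rw [interior_closedBall _ one_ne_zero] at hint
      rw [Metric.mem_ball, Complex.dist_eq, sub_zero, hz] at hint
      exact lt_irrefl _ hint

lemma isClosed_chordsUnion (α : 𝕋) (n : ℕ) : IsClosed (chordsUnion α n) := by
  apply Set.Finite.isClosed_biUnion (List.finite_length_eq Bool n)
  intro g _
  rw [chord, segment_eq_image]
  exact (isCompact_Icc.image (by continuity)).isClosed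

lemma emb_mem_diskMinus (α : 𝕋) (n : ℕ) (x : 𝕋) (hx : dbl^[n + 1] x ≠ α) :
    emb x ∈ diskMinus α n := by
  constructor
  · simp [Metric.mem_closedBall, Complex.dist_eq, abs_emb x]
  · intro hmem
    rw [chordsUnion, Set.mem_iUnion₂] at hmem
    obtain ⟨g, hg, hc⟩ := hmem
    have hg' : g.length = n := hg
    subst hg'
    have hiter : ∀ s : 𝕋, dbl s = α → dbl^[g.length + 1] (wtld α g s) = α := by
      intro s hs
      rw [Function.iterate_succ_apply', iter_wtld, hs]
    rcases mem_chord_circle (abs_emb x) hc with h | h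
    · exact hx (by rw [emb_inj h, hiter _ (dbl_star1 α)])
    · exact hx (by rw [emb_inj h, hiter _ (dbl_star2 α)])

lemma comp_eq (α : 𝕋) (n : ℕ) (x : 𝕋) (hemb : emb x ∈ diskMinus α n) {z : ℂ}
    (hcl : emb x ∈ closure (connectedComponentIn (diskMinus α n) z)) :
    connectedComponentIn (diskMinus α n) z = connectedComponentIn (diskMinus α n) (emb x) := by
  set D := diskMinus α n with hD
  -- a small ball around `emb x` avoiding the chords
  have hopen : IsOpen (chordsUnion α n)ᶜ := (isClosed_chordsUnion α n).isOpen_compl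
  obtain ⟨ε, hε, hball⟩ := Metric.isOpen_iff.mp hopen (emb x) hemb.2
  set U : Set ℂ := Metric.closedBall (0:ℂ) 1 ∩ Metric.ball (emb x) ε with hU
  have hUD : U ⊆ D := fun w hw => ⟨hw.1, hball hw.2⟩
  have hxU : emb x ∈ U := ⟨hemb.1, Metric.mem_ball_self hε⟩
  have hUpre : IsPreconnected U :=
    ((convex_closedBall (0:ℂ) 1).inter (convex_ball (emb x) ε)).isPreconnected
  -- the closure of the component meets the ball
  obtain ⟨w, hw1, hw2⟩ := (_root_.mem_closure_iff.mp hcl) (Metric.ball (emb x) ε)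
    Metric.isOpen_ball (Metric.mem_ball_self hε)
  have hwD : w ∈ D := connectedComponentIn_subset D z hw2
  have hwU : w ∈ U := ⟨hwD.1, hw1⟩
  have hzD : z ∈ D := by
    by_contra hzD
    rw [connectedComponentIn_eq_empty hzD] at hw2
    exact hw2
  have hzK : z ∈ connectedComponentIn D z := mem_connectedComponentIn hzD
  have hpre : IsPreconnected (U ∪ connectedComponentIn D z) :=
    hUpre.union w hwU hw2 isPreconnected_connectedComponentIn
  have hsub : U ∪ connectedComponentIn D z ⊆ D :=
    Set.union_subset hUD (connectedComponentIn_subset D z)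
  have hfin : U ∪ connectedComponentIn D z ⊆ connectedComponentIn D z :=
    hpre.subset_connectedComponentIn (Set.mem_union_right _ hzK) hsub
  exact connectedComponentIn_eq (hfin (Set.mem_union_left _ hxU))

end Stmt9Aux

/-- if `α` is not periodic and `h^{n+1}(x) ≠ α`, then there is exactly one
generalized cylinder set of degree `n` containing `x`. -/
theorem stmt_9 (α : 𝕋) (hα : ¬ Periodic' α) (n : ℕ) (x : 𝕋)
    (hx : dbl^[n + 1] x ≠ α) :
    ∃! C : Set 𝕋, IsGCS α n C ∧ x ∈ C := by
  have hemb := Stmt9Aux.emb_mem_diskMinus α n x hx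
  refine ⟨{y : 𝕋 | emb y ∈ closure (connectedComponentIn (diskMinus α n) (emb x))}, ⟨⟨emb x, hemb, rfl⟩, subset_closure (mem_connectedComponentIn hemb)⟩, ?_⟩
  rintro C ⟨⟨z, hz, rfl⟩, hxC⟩
  rw [Stmt9Aux.comp_eq α n x hemb hxC]
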